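/- The three-dimensional subalgebra ⟨E2 − D + P1, E1, P2⟩ of sl_3(ℝ) is not conjugate under SL_3(ℝ) to the subalgebra ⟨E2 + μD, E1, P2⟩ for any real μ. -/

import Mathlib

open Matrix

/-- the subalgebra `⟨E2 - D + P1, E1, P2⟩` of `sl₃(ℝ)` is not conjugate
under `SL₃(ℝ)` to `⟨E2 + μ D, E1, P2⟩` for any real `μ`. -/
theorem not_conjugate_f38_f37 (μ : ℝ)
    (E1 E2 D P1 P2 : Matrix (Fin 3) (Fin 3) ℝ)
    (hE1 : E1 = !![0, 0, 0; 1, 0, 0; 0, 0, 0])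
    (hE2 : E2 = !![1/2, 0, 0; 0, -1/2, 0; 0, 0, 0])
    (hD : D = !![1/6, 0, 0; 0, 1/6, 0; 0, 0, -1/3])
    (hP1 : P1 = !![0, 0, 1; 0, 0, 0; 0, 0, 0])
    (hP2 : P2 = !![0, 0, 0; 0, 0, 1; 0, 0, 0]) :
    ¬ ∃ g : Matrix (Fin 3) (Fin 3) ℝ, g.det = 1 ∧
      (fun x => g * x * g⁻¹) ''
          (Submodule.span ℝ ({E2 - D + P1, E1, P2} : Set (Matrix (Fin 3) (Fin 3) ℝ)) : Set _) =
        (Submodule.span ℝ ({E2 + μ • D, E1, P2} : Set (Matrix (Fin 3) (Fin 3) ℝ)) : Set _) := by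
  rintro ⟨g, hdet, hspan⟩
  have hu : IsUnit g.det := by rw [hdet]; exact isUnit_one
  have hgi : g⁻¹ * g = 1 := nonsing_inv_mul g hu
  have hgg : g * g⁻¹ = 1 := mul_nonsing_inv g hu
  have conj_mul : ∀ X Y : Matrix (Fin 3) (Fin 3) ℝ,
      (g * X * g⁻¹) * (g * Y * g⁻¹) = g * (X * Y) * g⁻¹ := by
    intro X Y
    calc (g * X * g⁻¹) * (g * Y * g⁻¹) = g * (X * ((g⁻¹ * g) * (Y * g⁻¹))) := by
          simp only [Matrix.mul_assoc]
      _ = g * (X * Y) * g⁻¹ := by rw [hgi, Matrix.one_mul]; simp only [Matrix.mul_assoc]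
  -- the "good" submodule T : matrices with vanishing (0,1),(0,2),(2,0),(2,1) entries
  set T : Submodule ℝ (Matrix (Fin 3) (Fin 3) ℝ) :=
    { carrier := {M | M 0 1 = 0 ∧ M 0 2 = 0 ∧ M 2 0 = 0 ∧ M 2 1 = 0}
      add_mem' := by
        rintro a b ⟨h1, h2, h3, h4⟩ ⟨k1, k2, k3, k4⟩
        refine ⟨?_, ?_, ?_, ?_⟩ <;> simp [Matrix.add_apply, h1, h2, h3, h4, k1, k2, k3, k4]
      zero_mem' := by refine ⟨?_, ?_, ?_, ?_⟩ <;> simp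
      smul_mem' := by
        rintro c a ⟨h1, h2, h3, h4⟩
        refine ⟨?_, ?_, ?_, ?_⟩ <;> simp [Matrix.smul_apply, h1, h2, h3, h4] } with hT
  have hle : Submodule.span ℝ ({E2 + μ • D, E1, P2} : Set (Matrix (Fin 3) (Fin 3) ℝ)) ≤ T := by
    rw [Submodule.span_le]
    rintro x (rfl | rfl | rfl) <;>
      refine ⟨?_, ?_, ?_, ?_⟩ <;>
        simp [hE1, hE2, hD, hP2, Matrix.add_apply, Matrix.smul_apply, Matrix.vecHead, Matrix.vecTail]
  have mem_of : ∀ x, x ∈ ({E2 - D + P1, E1, P2} : Set (Matrix (Fin 3) (Fin 3) ℝ)) →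
      g * x * g⁻¹ ∈ T := by
    intro x hx
    have hx1 : g * x * g⁻¹ ∈
        (Submodule.span ℝ ({E2 + μ • D, E1, P2} : Set (Matrix (Fin 3) (Fin 3) ℝ)) : Set _) := by
      rw [← hspan]
      exact ⟨x, Submodule.subset_span hx, rfl⟩
    exact hle hx1
  -- products of matrices in T stay in T
  have Tmul : ∀ M N : Matrix (Fin 3) (Fin 3) ℝ, M ∈ T → N ∈ T → M * N ∈ T := by
    rintro M N ⟨h1, h2, h3, h4⟩ ⟨k1, k2, k3, k4⟩
    refine ⟨?_, ?_, ?_, ?_⟩ <;>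
      simp [Matrix.mul_apply, Fin.sum_univ_three, h1, h2, h3, h4, k1, k2, k3, k4]
  set A : Matrix (Fin 3) (Fin 3) ℝ := E2 - D + P1 with hA
  have hM1 : g * A * g⁻¹ ∈ T := mem_of A (Set.mem_insert _ _)
  have hQ1 : g * E1 * g⁻¹ ∈ T := mem_of E1 (by simp)
  -- key polynomial identity : 3 A³ + A² - (2/3) A = P1
  have key : (3 : ℝ) • (A * A * A) + A * A - (2/3 : ℝ) • A = P1 := by
    subst hE1 hE2 hD hP1 hP2
    rw [hA]
    ext i j
    fin_cases i <;> fin_cases j <;>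
      norm_num [Matrix.mul_apply, Fin.sum_univ_three, Matrix.add_apply, Matrix.sub_apply,
        Matrix.smul_apply]
  -- hence g P1 g⁻¹ ∈ T
  have hQ3eq : g * P1 * g⁻¹ =
      (3 : ℝ) • ((g * A * g⁻¹) * (g * A * g⁻¹) * (g * A * g⁻¹)) +
        (g * A * g⁻¹) * (g * A * g⁻¹) - (2/3 : ℝ) • (g * A * g⁻¹) := by
    rw [conj_mul, conj_mul, ← key]
    simp only [Matrix.add_mul, Matrix.sub_mul, Matrix.mul_add, Matrix.mul_sub,
      Matrix.smul_mul, Matrix.mul_smul]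
  have hQ3 : g * P1 * g⁻¹ ∈ T := by
    rw [hQ3eq]
    exact sub_mem (add_mem (T.smul_mem _ (Tmul _ _ (Tmul _ _ hM1 hM1) hM1))
      (Tmul _ _ hM1 hM1)) (T.smul_mem _ hM1)
  -- squares vanish
  have hE1sq : E1 * E1 = 0 := by
    subst hE1; ext i j; fin_cases i <;> fin_cases j <;>
      norm_num [Matrix.mul_apply, Fin.sum_univ_three, Matrix.vecHead, Matrix.vecTail, Matrix.cons_val_two]
  have hP1sq : P1 * P1 = 0 := by
    subst hP1; ext i j; fin_cases i <;> fin_cases j <;>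
      norm_num [Matrix.mul_apply, Fin.sum_univ_three, Matrix.vecHead, Matrix.vecTail, Matrix.cons_val_two]
  have hE1P1 : E1 * P1 = P2 := by
    subst hE1 hP1 hP2; ext i j; fin_cases i <;> fin_cases j <;>
      norm_num [Matrix.mul_apply, Fin.sum_univ_three, Matrix.vecHead, Matrix.vecTail, Matrix.cons_val_two]
  have hQ1sq : (g * E1 * g⁻¹) * (g * E1 * g⁻¹) = 0 := by
    rw [conj_mul, hE1sq, Matrix.mul_zero, Matrix.zero_mul]
  have hQ3sq : (g * P1 * g⁻¹) * (g * P1 * g⁻¹) = 0 := by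
    rw [conj_mul, hP1sq, Matrix.mul_zero, Matrix.zero_mul]
  -- an element of T with zero square has zero diagonal
  have diag0 : ∀ Q : Matrix (Fin 3) (Fin 3) ℝ, Q ∈ T → Q * Q = 0 →
      Q 0 0 = 0 ∧ Q 1 1 = 0 ∧ Q 2 2 = 0 := by
    rintro Q ⟨h1, h2, h3, h4⟩ hsq
    have e00 := congrFun (congrFun hsq 0) 0
    have e11 := congrFun (congrFun hsq 1) 1
    have e22 := congrFun (congrFun hsq 2) 2
    simp [Matrix.mul_apply, Fin.sum_univ_three, h1, h2, h3, h4] at e00 e11 e22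
    exact ⟨e00, e11, e22⟩
  obtain ⟨a00, a11, a22⟩ := diag0 _ hQ1 hQ1sq
  obtain ⟨b00, b11, b22⟩ := diag0 _ hQ3 hQ3sq
  obtain ⟨a01, a02, a20, a21⟩ := hQ1
  obtain ⟨b01, b02, b20, b21⟩ := hQ3
  -- hence the product (g E1 g⁻¹)(g P1 g⁻¹) = 0
  have prod0 : ∀ M N : Matrix (Fin 3) (Fin 3) ℝ,
      M 0 0 = 0 → M 0 1 = 0 → M 0 2 = 0 → M 1 1 = 0 → M 2 0 = 0 → M 2 1 = 0 → M 2 2 = 0 →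
      N 0 0 = 0 → N 0 1 = 0 → N 0 2 = 0 → N 1 1 = 0 → N 2 0 = 0 → N 2 1 = 0 → N 2 2 = 0 →
      M * N = 0 := by
    intro M N m1 m2 m3 m4 m5 m6 m7 n1 n2 n3 n4 n5 n6 n7
    ext i j
    fin_cases i <;> fin_cases j <;>
      simp [Matrix.mul_apply, Fin.sum_univ_three, Matrix.vecHead, Matrix.vecTail, m1, m2, m3, m4, m5, m6, m7,
        n1, n2, n3, n4, n5, n6, n7]
  have hprod : (g * E1 * g⁻¹) * (g * P1 * g⁻¹) = 0 :=
    prod0 _ _ a00 a01 a02 a11 a20 a21 a22 b00 b01 b02 b11 b20 b21 b22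
  rw [conj_mul, hE1P1] at hprod
  have hP2zero : P2 = 0 := by
    have : g⁻¹ * (g * P2 * g⁻¹) * g = 0 := by rw [hprod]; simp
    calc P2 = (g⁻¹ * g) * P2 * (g⁻¹ * g) := by rw [hgi]; simp
      _ = g⁻¹ * (g * P2 * g⁻¹) * g := by simp only [Matrix.mul_assoc]
      _ = 0 := this
  have : (1 : ℝ) = 0 := by
    have := congrFun (congrFun hP2zero 1) 2
    rw [hP2] at this
    simp at this
  norm_num at this
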